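/- Let ‖·‖ be a norm on ℝ^d with closed balls B(x,r), let K : ℝ^d → [0,∞) be a symmetric kernel with tail function κ∞ with respect to ‖·‖, and let P be a λ^d-absolutely continuous probability measure on ℝ^d that is normal at some level ρ ≥ 0. If x ∈ ℝ^d and σ > 0 satisfy B(x, σ) ⊆ ℝ^d ∖ M_ρ, then for every δ > 0 we have h_{P,δ}(x) < ρ + δ^{−d}·κ∞(σ/δ). -/

import Mathlib

open MeasureTheory ENNReal

noncomputable section

/-- `N` is a norm on `ℝ^d`. -/
structure IsNormOn (d : ℕ) (N : (Fin d → ℝ) → ℝ) : Prop where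
  eq_zero_iff : ∀ x, N x = 0 ↔ x = 0
  smul : ∀ (a : ℝ) (x : Fin d → ℝ), N (a • x) = |a| * N x
  triangle : ∀ x y, N (x + y) ≤ N x + N y

/-- A symmetric kernel on `ℝ^d`: a bounded measurable function `K : ℝ^d → [0,∞)` that is
strictly positive in a neighborhood of `0`, even, and integrates to `1` with respect to
Lebesgue measure. -/
structure IsSymmKernel (d : ℕ) (K : (Fin d → ℝ) → ℝ) : Prop where
  measurable : Measurable K
  nonneg : ∀ x, 0 ≤ K x
  bddAbove : BddAbove (Set.range K)
  pos_near_zero : ∀ᶠ x in nhds (0 : Fin d → ℝ), 0 < K x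
  symm : ∀ x, K (-x) = K x
  integral_one : ∫ x, K x = 1

/-- The tail function `κ₁(r) := ∫_{ℝ^d ∖ B(0,r)} K dλ^d` of a kernel `K`, with respect to
the norm `N`. -/
def kappaOne (d : ℕ) (N K : (Fin d → ℝ) → ℝ) (r : ℝ) : ℝ :=
  ∫ x in {x : Fin d → ℝ | r < N x}, K x

/-- The tail function `κ∞(r) := sup_{x ∈ ℝ^d ∖ B(0,r)} K x` of a kernel `K`, with respect
to the norm `N`. -/
def kappaInf (d : ℕ) (N K : (Fin d → ℝ) → ℝ) (r : ℝ) : ℝ :=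
  sSup (K '' {x : Fin d → ℝ | r < N x})

/-- The infinite-sample kernel density estimator
`h_{P,δ}(x) := δ^{−d} ∫ K((x−y)/δ) dP(y)`. -/
def kdeP (d : ℕ) (K : (Fin d → ℝ) → ℝ) (δ : ℝ) (P : Measure (Fin d → ℝ))
    (x : Fin d → ℝ) : ℝ :=
  (δ ^ d)⁻¹ * ∫ y, K (δ⁻¹ • (x - y)) ∂P

/-- `h` is a Lebesgue density of the measure `P` on `ℝ^d`. -/
def IsDensityOf (d : ℕ) (P : Measure (Fin d → ℝ)) (h : (Fin d → ℝ) → ℝ) : Prop :=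
  Measurable h ∧ (∀ x, 0 ≤ h x) ∧ P = volume.withDensity fun x => ENNReal.ofReal (h x)

/-- `M_ρ`: the support of the measure `A ↦ λ^d(A ∩ {h ≥ ρ})`, i.e. the set of points all
of whose open neighborhoods intersect `{h ≥ ρ}` in a set of positive Lebesgue measure. -/
def Mset (d : ℕ) (h : (Fin d → ℝ) → ℝ) (ρ : ℝ) : Set (Fin d → ℝ) :=
  {x | ∀ U : Set (Fin d → ℝ), IsOpen U → x ∈ U → 0 < volume (U ∩ {y | ρ ≤ h y})}

/-- `P` (with density `h`) is normal at level `ρ`: there are densities `h₁, h₂` of `P` with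
`λ^d(M_ρ ∖ {h₁ ≥ ρ}) = 0` and `λ^d({h₂ > ρ} ∖ int M_ρ) = 0`. -/
def NormalAtLevel (d : ℕ) (P : Measure (Fin d → ℝ)) (h : (Fin d → ℝ) → ℝ) (ρ : ℝ) : Prop :=
  ∃ h₁ h₂, IsDensityOf d P h₁ ∧ IsDensityOf d P h₂ ∧
    volume (Mset d h ρ \ {x | ρ ≤ h₁ x}) = 0 ∧
    volume ({x | ρ < h₂ x} \ interior (Mset d h ρ)) = 0

namespace IsNormOn

variable {d : ℕ} {N : (Fin d → ℝ) → ℝ}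

theorem zero (hN : IsNormOn d N) : N 0 = 0 := (hN.eq_zero_iff 0).2 rfl

theorem nonneg (hN : IsNormOn d N) (x : Fin d → ℝ) : 0 ≤ N x := by
  have h := hN.triangle x (-x)
  have h2 : N (-x) = N x := by
    have := hN.smul (-1) x; simpa using this
  rw [add_neg_cancel, hN.zero, h2] at h
  linarith

theorem neg (hN : IsNormOn d N) (x : Fin d → ℝ) : N (-x) = N x := by
  have := hN.smul (-1) x; simpa using this

theorem sum_le (hN : IsNormOn d N) {ι : Type*} (s : Finset ι) (f : ι → (Fin d → ℝ)) :
    N (∑ i ∈ s, f i) ≤ ∑ i ∈ s, N (f i) := by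
  classical
  induction s using Finset.cons_induction with
  | empty => simp [hN.zero]
  | cons i s hi ih =>
    rw [Finset.sum_cons, Finset.sum_cons]
    exact (hN.triangle _ _).trans (by linarith)

theorem continuous (hN : IsNormOn d N) : Continuous N := by
  classical
  set C : ℝ := ∑ i : Fin d, N (Pi.single i 1) with hC
  have hbound : ∀ z : Fin d → ℝ, N z ≤ C * ‖z‖ := by
    intro z
    have hz : z = ∑ i : Fin d, (z i) • (Pi.single i 1 : Fin d → ℝ) := by
      funext j
      simp [Finset.sum_apply, Pi.single_apply, Finset.sum_ite_eq', mul_comm]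
    calc N z = N (∑ i : Fin d, (z i) • (Pi.single i 1 : Fin d → ℝ)) := by rw [← hz]
      _ ≤ ∑ i : Fin d, N ((z i) • (Pi.single i 1 : Fin d → ℝ)) := hN.sum_le _ _
      _ = ∑ i : Fin d, |z i| * N (Pi.single i 1) := by
          simp_rw [hN.smul]
      _ ≤ ∑ i : Fin d, ‖z‖ * N (Pi.single i 1) := by
          refine Finset.sum_le_sum fun i _ => ?_
          exact mul_le_mul_of_nonneg_right (by simpa using norm_le_pi_norm z i) (hN.nonneg _)
      _ = C * ‖z‖ := by rw [← Finset.mul_sum, mul_comm]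
  have hlip : ∀ a b : Fin d → ℝ, |N a - N b| ≤ C * ‖a - b‖ := by
    intro a b
    have h1 : N a ≤ N (a - b) + N b := by
      have := hN.triangle (a - b) b; simpa using this
    have h2 : N b ≤ N (b - a) + N a := by
      have := hN.triangle (b - a) a; simpa using this
    have h3 : N (b - a) = N (a - b) := by
      rw [← hN.neg (a - b)]; congr 1; abel
    have h4 := hbound (a - b)
    rw [abs_sub_le_iff]
    constructor <;> linarith [h3 ▸ h2]
  rw [Metric.continuous_iff]
  intro a ε hε
  rcases le_or_gt C 0 with hC0 | hC0
  · refine ⟨1, one_pos, fun b _ => ?_⟩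
    have := hlip b a
    have h5 : C * ‖b - a‖ ≤ 0 := mul_nonpos_of_nonpos_of_nonneg hC0 (norm_nonneg _)
    have : |N b - N a| ≤ 0 := le_trans this h5
    simp only [Real.dist_eq]
    linarith [abs_nonneg (N b - N a)]
  · refine ⟨ε / C, by positivity, fun b hb => ?_⟩
    have := hlip b a
    rw [dist_eq_norm] at hb
    simp only [Real.dist_eq]
    calc |N b - N a| ≤ C * ‖b - a‖ := this
      _ < C * (ε / C) := by exact mul_lt_mul_of_pos_left hb hC0
      _ = ε := by field_simp

end IsNormOn

/-- Let `‖·‖` be a norm on `ℝ^d` with closed balls `B(x,r)`, `K` a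
symmetric kernel with tail function `κ∞`, and `P` a Lebesgue-absolutely continuous
probability measure on `ℝ^d` that is normal at level `ρ ≥ 0`.  If `B(x,σ) ⊆ ℝ^d ∖ M_ρ`
for some `x ∈ ℝ^d`, `σ > 0`, then for every `δ > 0` we have
`h_{P,δ}(x) < ρ + δ^{−d}·κ∞(σ/δ)`. -/
theorem kdeP_upper_bound_of_ball_subset_compl {d : ℕ} (hd : 0 < d)
    (N : (Fin d → ℝ) → ℝ) (hN : IsNormOn d N)
    (K : (Fin d → ℝ) → ℝ) (hK : IsSymmKernel d K)
    (P : Measure (Fin d → ℝ)) [IsProbabilityMeasure P]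
    (h : (Fin d → ℝ) → ℝ) (hdens : IsDensityOf d P h)
    (ρ : ℝ) (hρ : 0 ≤ ρ) (hnormal : NormalAtLevel d P h ρ)
    (x : Fin d → ℝ) (σ : ℝ) (hσ : 0 < σ)
    (hball : {y : Fin d → ℝ | N (y - x) ≤ σ} ⊆ (Mset d h ρ)ᶜ)
    (δ : ℝ) (hδ : 0 < δ) :
    kdeP d K δ P x < ρ + (δ ^ d)⁻¹ * kappaInf d N K (σ / δ) := by
  classical
  obtain ⟨hm, h0, hPd⟩ := hdens
  set B : Set (Fin d → ℝ) := {y | N (y - x) ≤ σ} with hBdef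
  set K' : (Fin d → ℝ) → ℝ := fun y => K (δ⁻¹ • (x - y)) with hK'def
  set κ : ℝ := kappaInf d N K (σ / δ) with hκdef
  have hδd : (0:ℝ) < δ ^ d := by positivity
  -- measurability of B
  have hNc : Continuous N := hN.continuous
  have hBclosed : IsClosed B := by
    have : Continuous fun y : Fin d → ℝ => N (y - x) := hNc.comp (continuous_id.sub continuous_const)
    exact isClosed_le this continuous_const
  have hBmeas : MeasurableSet B := hBclosed.measurableSet
  -- K' measurability
  have hK'meas : Measurable K' :=
    hK.measurable.comp ((continuous_const.sub continuous_id).const_smul δ⁻¹).measurable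
  -- K bound
  obtain ⟨C, hC⟩ := hK.bddAbove
  have hCb : ∀ z, K z ≤ C := fun z => hC ⟨z, rfl⟩
  -- lintegral of density is 1
  have hl : ∫⁻ y, ENNReal.ofReal (h y) = 1 := by
    have := measure_univ (μ := P)
    rwa [hPd, withDensity_apply _ MeasurableSet.univ, setLIntegral_univ] at this
  -- h integrable
  have hint : Integrable h := by
    refine ⟨hm.aestronglyMeasurable, ?_⟩
    rw [hasFiniteIntegral_iff_ofReal (ae_of_all _ h0), hl]
    exact ENNReal.one_lt_top
  have hval : ∫ y, h y = 1 := by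
    rw [integral_eq_lintegral_of_nonneg_ae (ae_of_all _ h0) hm.aestronglyMeasurable, hl]
    simp
  -- K integrable
  have hKint : Integrable K := by
    by_contra hc
    have h1 := hK.integral_one
    rw [integral_undef hc] at h1
    norm_num at h1
  -- K' integrable and its integral
  have hK'int : Integrable K' := by
    have h1 : Integrable (fun z => K (δ⁻¹ • z)) :=
      (integrable_comp_smul_iff volume K (inv_ne_zero hδ.ne')).mpr hKint
    exact h1.comp_sub_left x
  have hK'val : ∫ y, K' y = δ ^ d := by
    have h1 : ∫ y, K' y = ∫ z, K (δ⁻¹ • z) :=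
      integral_sub_left_eq_self (fun z => K (δ⁻¹ • z)) volume x
    have h2 : ∫ z, K (δ⁻¹ • z) = |((δ⁻¹) ^ Module.finrank ℝ (Fin d → ℝ))⁻¹| • ∫ z, K z :=
      Measure.integral_comp_smul volume K δ⁻¹
    rw [h1, h2, hK.integral_one, Module.finrank_fin_fun, smul_eq_mul, mul_one,
      ← inv_pow, inv_inv, abs_of_pos hδd]
  -- K'·h integrable
  have hK'h : Integrable (fun y => K' y * h y) := by
    refine hint.bdd_mul (c := C) hK'meas.aestronglyMeasurable (ae_of_all _ fun y => ?_)
    rw [Real.norm_eq_abs, abs_of_nonneg (hK.nonneg _)]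
    exact hCb _
  -- rewrite kdeP as a Lebesgue integral against the density
  have hswap : ∫ y, K (δ⁻¹ • (x - y)) ∂P = ∫ y, K' y * h y := by
    rw [hPd]
    have he : (fun y => ENNReal.ofReal (h y)) = fun y => ((h y).toNNReal : ℝ≥0∞) := rfl
    rw [he, integral_withDensity_eq_integral_smul hm.real_toNNReal
      (fun y => K (δ⁻¹ • (x - y)))]
    congr 1
    funext y
    show (h y).toNNReal • K (δ⁻¹ • (x - y)) = K (δ⁻¹ • (x - y)) * h y
    rw [NNReal.smul_def, smul_eq_mul, Real.coe_toNNReal _ (h0 y), mul_comm]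
  have hkde : kdeP d K δ P x = (δ ^ d)⁻¹ * ∫ y, K' y * h y := by
    unfold kdeP
    rw [hswap]
  -- covering: B ∩ {ρ ≤ h} is null
  have hnull : volume (B ∩ {y | ρ ≤ h y}) = 0 := by
    set 𝒰 : Set (Set (Fin d → ℝ)) := {U | IsOpen U ∧ volume (U ∩ {y | ρ ≤ h y}) = 0} with h𝒰
    have hcov : B ⊆ ⋃₀ 𝒰 := by
      intro y hy
      have hy' := hball hy
      simp only [Mset, Set.mem_compl_iff, Set.mem_setOf_eq, not_forall] at hy'
      obtain ⟨U, hUo, hyU, hU0⟩ := hy'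
      exact ⟨U, ⟨hUo, by simpa using hU0⟩, hyU⟩
    obtain ⟨T, hTc, hT𝒰, hTeq⟩ :=
      TopologicalSpace.isOpen_sUnion_countable 𝒰 (fun U hU => hU.1)
    have hTnull : volume (⋃₀ T ∩ {y | ρ ≤ h y}) = 0 := by
      rw [Set.sUnion_eq_biUnion, Set.iUnion₂_inter]
      rw [measure_biUnion_null_iff hTc]
      exact fun U hU => (hT𝒰 hU).2
    refine measure_mono_null ?_ hTnull
    rw [hTeq]
    exact Set.inter_subset_inter_left _ hcov
  -- positivity witness set W
  obtain ⟨V, hVK, hVo, hV0⟩ := eventually_nhds_iff.1 hK.pos_near_zero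
  set W : Set (Fin d → ℝ) :=
    ((fun y => δ⁻¹ • (x - y)) ⁻¹' V) ∩ {y | N (y - x) < σ} with hWdef
  have hWo : IsOpen W := by
    refine IsOpen.inter ?_ ?_
    · exact hVo.preimage ((continuous_const.sub continuous_id).const_smul δ⁻¹)
    · have : Continuous fun y : Fin d → ℝ => N (y - x) :=
        hNc.comp (continuous_id.sub continuous_const)
      exact isOpen_lt this continuous_const
  have hxW : x ∈ W := by
    constructor
    · show δ⁻¹ • (x - x) ∈ V
      simpa using hV0
    · show N (x - x) < σ
      simpa [hN.zero] using hσ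
  have hWpos : 0 < volume W := hWo.measure_pos volume ⟨x, hxW⟩
  -- strict inequality on B
  set f : (Fin d → ℝ) → ℝ := fun y => K' y * (ρ - h y) with hfdef
  have hW_sub : W ⊆ (Function.support f ∩ B) ∪ (B ∩ {y | ρ ≤ h y}) := by
    intro y ⟨hyV, hyN⟩
    have hyB : y ∈ B := show N (y - x) ≤ σ from le_of_lt hyN
    by_cases hyh : ρ ≤ h y
    · exact Or.inr ⟨hyB, hyh⟩
    · push_neg at hyh
      refine Or.inl ⟨?_, hyB⟩
      have hK'pos : 0 < K' y := hVK _ hyV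
      have : 0 < f y := mul_pos hK'pos (by linarith)
      exact ne_of_gt this
  have hsupp_pos : 0 < volume (Function.support f ∩ B) := by
    by_contra hc
    push_neg at hc
    have h1 : volume (Function.support f ∩ B) = 0 := le_antisymm hc zero_le
    have h2 : volume W = 0 :=
      measure_mono_null hW_sub (measure_union_null h1 hnull)
    exact absurd h2 (ne_of_gt hWpos)
  have hfint : IntegrableOn f B := by
    have h1 : f = fun y => ρ * K' y - K' y * h y := by
      funext y; simp only [hfdef]; ring
    rw [h1]
    exact ((hK'int.const_mul ρ).sub hK'h).integrableOn
  have hae : ∀ᵐ y ∂(volume.restrict B), 0 ≤ f y := by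
    have h1 : ∀ᵐ y ∂(volume.restrict B), y ∈ B := ae_restrict_mem hBmeas
    have h2 : ∀ᵐ y ∂(volume.restrict B), ¬ (ρ ≤ h y) := by
      rw [ae_restrict_iff' hBmeas]
      have h3 : volume {y | ¬ (y ∈ B → ¬ ρ ≤ h y)} = 0 := by
        refine measure_mono_null ?_ hnull
        intro y hy
        simp only [Set.mem_setOf_eq, Classical.not_imp, not_not] at hy
        exact ⟨hy.1, hy.2⟩
      exact h3
    filter_upwards [h2] with y hy
    push_neg at hy
    exact mul_nonneg (hK.nonneg _) (by linarith)
  have hBint_lt : (∫ y in B, K' y * h y) < ρ * ∫ y in B, K' y := by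
    have hpos : 0 < ∫ y in B, f y :=
      (setIntegral_pos_iff_support_of_nonneg_ae hae hfint).2 hsupp_pos
    have heq : (∫ y in B, f y) = ρ * (∫ y in B, K' y) - ∫ y in B, K' y * h y := by
      have h1 : f = fun y => ρ * K' y - K' y * h y := by
        funext y; simp only [hfdef]; ring
      rw [h1, integral_sub ((hK'int.const_mul ρ).integrableOn) hK'h.integrableOn,
        integral_const_mul]
    rw [heq] at hpos
    linarith
  have hBK'le : (∫ y in B, K' y) ≤ δ ^ d := by
    rw [← hK'val]
    exact setIntegral_le_integral hK'int (ae_of_all _ fun y => hK.nonneg _)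
  -- tail bound on Bᶜ
  have hSne : ∃ z, σ / δ < N z := by
    have hu : (fun _ : Fin d => (1:ℝ)) ≠ 0 := by
      intro hu0
      have := congrFun hu0 ⟨0, hd⟩
      norm_num at this
    have hNu : 0 < N (fun _ => (1:ℝ)) := by
      rcases lt_or_eq_of_le (hN.nonneg (fun _ => (1:ℝ))) with h1 | h1
      · exact h1
      · exact absurd ((hN.eq_zero_iff _).1 h1.symm) hu
    refine ⟨((σ / δ + 1) / N (fun _ => (1:ℝ))) • (fun _ => (1:ℝ)), ?_⟩
    rw [hN.smul]
    have hpos : 0 < σ / δ + 1 := by positivity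
    rw [abs_of_pos (div_pos hpos hNu), div_mul_cancel₀ _ (ne_of_gt hNu)]
    linarith
  obtain ⟨z₀, hz₀⟩ := hSne
  have hbdd : BddAbove (K '' {z | σ / δ < N z}) :=
    BddAbove.mono (Set.image_subset_range K _) ⟨C, hC⟩
  have hκ0 : 0 ≤ κ := le_trans (hK.nonneg z₀) (le_csSup hbdd ⟨z₀, hz₀, rfl⟩)
  have htail : ∀ y ∉ B, K' y ≤ κ := by
    intro y hy
    have hyσ : σ < N (y - x) := by
      simpa [hBdef] using hy
    refine le_csSup hbdd ⟨δ⁻¹ • (x - y), ?_, rfl⟩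
    show σ / δ < N (δ⁻¹ • (x - y))
    rw [hN.smul, abs_of_pos (inv_pos.2 hδ)]
    have hxy : N (x - y) = N (y - x) := by
      rw [← hN.neg (y - x)]; congr 1; abel
    rw [hxy, div_eq_inv_mul]
    exact mul_lt_mul_of_pos_left hyσ (inv_pos.2 hδ)
  have hBc_le : (∫ y in Bᶜ, K' y * h y) ≤ κ := by
    have h1 : (∫ y in Bᶜ, K' y * h y) ≤ ∫ y in Bᶜ, κ * h y := by
      refine setIntegral_mono_on hK'h.integrableOn ((hint.const_mul κ).integrableOn)
        hBmeas.compl fun y hy => ?_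
      exact mul_le_mul_of_nonneg_right (htail y hy) (h0 y)
    have h2 : (∫ y in Bᶜ, κ * h y) = κ * ∫ y in Bᶜ, h y := integral_const_mul _ _
    have h3 : (∫ y in Bᶜ, h y) ≤ 1 := by
      rw [← hval]
      exact setIntegral_le_integral hint (ae_of_all _ h0)
    calc (∫ y in Bᶜ, K' y * h y) ≤ κ * ∫ y in Bᶜ, h y := by rw [← h2]; exact h1
      _ ≤ κ * 1 := mul_le_mul_of_nonneg_left h3 hκ0
      _ = κ := mul_one κ
  -- combine
  have hsplit : (∫ y, K' y * h y) =
      (∫ y in B, K' y * h y) + ∫ y in Bᶜ, K' y * h y :=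
    (integral_add_compl hBmeas hK'h).symm
  rw [hkde, hsplit]
  have hstrict : (∫ y in B, K' y * h y) + ∫ y in Bᶜ, K' y * h y < ρ * δ ^ d + κ := by
    have := mul_le_mul_of_nonneg_left hBK'le hρ
    linarith
  calc (δ ^ d)⁻¹ * ((∫ y in B, K' y * h y) + ∫ y in Bᶜ, K' y * h y)
      < (δ ^ d)⁻¹ * (ρ * δ ^ d + κ) := by
        exact mul_lt_mul_of_pos_left hstrict (inv_pos.2 hδd)
    _ = ρ + (δ ^ d)⁻¹ * κ := by field_simp
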